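/- arXiv:2106.11950 — 3 statements merged into one kernel-verified Lean document; each statement's English description precedes it below -/
import Mathlib

section
/- With F and R as above: if R(0) ≥ 0 then F'(x) < 0 for all x ∈ (0, β₀), and hence x = 0 is the unique maximizer of F on [0, β₀). -/
open Real Set

/-- if `R(0) ≥ 0` then `F' < 0` on `(0, β₀)` and `x = 0` is the unique
maximizer of `F` on `[0, β₀)`. -/
theorem stmt_7 (L : ℕ) (hL : 0 < L) (β₀ : ℝ) (hβ₀ : 0 < β₀)
    (β σ : Fin L → ℝ) (hβ : ∀ ℓ, 0 < β ℓ) (hσ : ∀ ℓ, 0 < σ ℓ)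
    (F R : ℝ → ℝ)
    (hF : ∀ x ∈ Set.Ico (0 : ℝ) β₀,
      F x = x - β₀ * Real.log (β₀ / (β₀ - x))
        + ∑ ℓ, (β ℓ * x / (σ ℓ) ^ 2 - β ℓ * Real.log (1 + x / (σ ℓ) ^ 2)))
    (hR : ∀ x ∈ Set.Ico (0 : ℝ) β₀,
      R x = 1 - ∑ ℓ, (β ℓ / (σ ℓ) ^ 2) * ((β₀ - x) / ((σ ℓ) ^ 2 + x)))
    (hR0 : 0 ≤ R 0) :
    (∀ x ∈ Set.Ioo (0 : ℝ) β₀, deriv F x < 0) ∧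
    (∀ x ∈ Set.Ico (0 : ℝ) β₀, x ≠ 0 → F x < F 0) := by
  -- auxiliary: R(0) ≥ 0 gives the key sum bound
  have hsumb : ∑ ℓ, β ℓ * β₀ / (σ ℓ) ^ 4 ≤ 1 := by
    have h0 : (0:ℝ) ∈ Set.Ico (0:ℝ) β₀ := ⟨le_refl 0, hβ₀⟩
    have := hR 0 h0
    rw [this] at hR0
    have heq : ∑ ℓ, (β ℓ / (σ ℓ) ^ 2) * ((β₀ - 0) / ((σ ℓ) ^ 2 + 0))
        = ∑ ℓ, β ℓ * β₀ / (σ ℓ) ^ 4 := by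
      apply Finset.sum_congr rfl
      intro ℓ _
      have hσ0 : σ ℓ ≠ 0 := (hσ ℓ).ne'
      rw [sub_zero, add_zero, div_mul_div_comm]
      congr 1
      ring
    rw [heq] at hR0
    linarith
  -- the smooth replacement function
  set h : ℝ → ℝ := fun y => y - β₀ * (Real.log β₀ - Real.log (β₀ - y))
      + ∑ ℓ, (β ℓ * y / (σ ℓ) ^ 2 - β ℓ * Real.log (1 + y / (σ ℓ) ^ 2)) with hh
  have hFh : ∀ y ∈ Set.Ico (0:ℝ) β₀, F y = h y := by
    intro y hy
    have hsub : β₀ - y ≠ 0 := (sub_pos.2 hy.2).ne'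
    rw [hF y hy, hh]
    simp only []
    rw [Real.log_div hβ₀.ne' hsub]
  -- derivative of h at points of (0, β₀)
  have hderiv : ∀ x ∈ Set.Ioo (0:ℝ) β₀, HasDerivAt h
      (1 - β₀ / (β₀ - x) + ∑ ℓ, (β ℓ / (σ ℓ) ^ 2 - β ℓ / ((σ ℓ) ^ 2 + x))) x := by
    intro x hx
    have hsub : β₀ - x ≠ 0 := (sub_pos.2 hx.2).ne'
    have hlog : HasDerivAt (fun y => Real.log β₀ - Real.log (β₀ - y)) (1 / (β₀ - x)) x := by
      have h1 : HasDerivAt (fun y : ℝ => β₀ - y) (-1) x := (hasDerivAt_id x).const_sub β₀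
      have h2 := (h1.log hsub).const_sub (Real.log β₀)
      convert h2 using 1
      case e'_4 => rfl
      case e'_5 => rfl
      ring
    have hterm : ∀ ℓ, HasDerivAt
        (fun y => β ℓ * y / (σ ℓ) ^ 2 - β ℓ * Real.log (1 + y / (σ ℓ) ^ 2))
        (β ℓ / (σ ℓ) ^ 2 - β ℓ / ((σ ℓ) ^ 2 + x)) x := by
      intro ℓ
      have hσ2 : (0:ℝ) < (σ ℓ) ^ 2 := pow_pos (hσ ℓ) 2
      have hpos : (0:ℝ) < 1 + x / (σ ℓ) ^ 2 := by
        have : 0 < x / (σ ℓ) ^ 2 := div_pos hx.1 hσ2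
        linarith
      have ha : HasDerivAt (fun y => β ℓ * y / (σ ℓ) ^ 2) (β ℓ / (σ ℓ) ^ 2) x := by
        simpa using ((hasDerivAt_id x).const_mul (β ℓ)).div_const ((σ ℓ) ^ 2)
      have hb : HasDerivAt (fun y : ℝ => 1 + y / (σ ℓ) ^ 2) (1 / (σ ℓ) ^ 2) x := by
        simpa using ((hasDerivAt_id x).div_const ((σ ℓ) ^ 2)).const_add 1
      have hc := (hb.log hpos.ne').const_mul (β ℓ)
      have := ha.sub hc
      convert this using 1
      case e'_4 => rfl
      case e'_5 => rfl
      case e'_8 => rfl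
      have hσx : (σ ℓ) ^ 2 + x ≠ 0 := (add_pos hσ2 hx.1).ne'
      have hσ2' : (σ ℓ) ^ 2 ≠ 0 := hσ2.ne'
      rw [show (1:ℝ) + x / (σ ℓ) ^ 2 = ((σ ℓ) ^ 2 + x) / (σ ℓ) ^ 2 by rw [add_div, div_self hσ2']]
      rw [div_div_div_cancel_right₀ hσ2']
      ring
    have hsum := HasDerivAt.fun_sum (fun ℓ (_ : ℓ ∈ Finset.univ) => hterm ℓ)
    have hmain := ((hasDerivAt_id x).sub (hlog.const_mul β₀)).add hsum
    convert hmain using 1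
    case e'_4 => rfl
    case e'_5 => rfl
    case e'_8 => rfl
    ring
  -- the derivative value is negative
  have hneg : ∀ x ∈ Set.Ioo (0:ℝ) β₀,
      1 - β₀ / (β₀ - x) + ∑ ℓ, (β ℓ / (σ ℓ) ^ 2 - β ℓ / ((σ ℓ) ^ 2 + x)) < 0 := by
    intro x hx
    have hxp : 0 < x := hx.1
    have hbx : 0 < β₀ - x := sub_pos.2 hx.2
    have hstep : ∀ ℓ ∈ Finset.univ, β ℓ / (σ ℓ) ^ 2 - β ℓ / ((σ ℓ) ^ 2 + x)
        < (β ℓ * β₀ / (σ ℓ) ^ 4) * (x / (β₀ - x)) := by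
      intro ℓ _
      have hσ2 : (0:ℝ) < (σ ℓ) ^ 2 := pow_pos (hσ ℓ) 2
      have hσx : (0:ℝ) < (σ ℓ) ^ 2 + x := add_pos hσ2 hxp
      have hβl := hβ ℓ
      rw [div_sub_div _ _ hσ2.ne' hσx.ne', div_mul_div_comm,
        div_lt_div_iff₀ (mul_pos hσ2 hσx) (mul_pos (pow_pos (hσ ℓ) 4) hbx)]
      have h4 : (σ ℓ) ^ 4 = (σ ℓ) ^ 2 * (σ ℓ) ^ 2 := by ring
      nlinarith [mul_pos (mul_pos hβl (mul_pos hxp hxp)) (mul_pos hσ2 hσ2),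
        mul_pos (mul_pos (mul_pos hβl hβ₀) (mul_pos hxp hxp)) hσ2]
    have hne : (Finset.univ : Finset (Fin L)).Nonempty := by
      haveI : Nonempty (Fin L) := ⟨⟨0, hL⟩⟩
      exact Finset.univ_nonempty
    have hsumlt := Finset.sum_lt_sum_of_nonempty hne hstep
    have hsum2 : ∑ ℓ, (β ℓ * β₀ / (σ ℓ) ^ 4) * (x / (β₀ - x))
        = (∑ ℓ, β ℓ * β₀ / (σ ℓ) ^ 4) * (x / (β₀ - x)) := by
      rw [Finset.sum_mul]
    have hxt : 0 ≤ x / (β₀ - x) := by positivity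
    have hle : (∑ ℓ, β ℓ * β₀ / (σ ℓ) ^ 4) * (x / (β₀ - x)) ≤ 1 * (x / (β₀ - x)) :=
      mul_le_mul_of_nonneg_right hsumb hxt
    have hkey : 1 - β₀ / (β₀ - x) = -(x / (β₀ - x)) := by
      field_simp
      ring
    rw [hkey]
    rw [hsum2] at hsumlt
    linarith
  constructor
  · intro x hx
    have heq : F =ᶠ[nhds x] h :=
      Filter.eventuallyEq_of_mem (isOpen_Ioo.mem_nhds hx)
        (fun y hy => hFh y ⟨le_of_lt hy.1, hy.2⟩)
    have hd := (hderiv x hx).congr_of_eventuallyEq heq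
    rw [hd.deriv]
    exact hneg x hx
  · intro x hx hne
    have hcont : ContinuousOn F (Set.Ico 0 β₀) := by
      apply ContinuousOn.congr _ hFh
      apply ContinuousOn.add
      · apply ContinuousOn.sub continuousOn_id
        apply ContinuousOn.mul continuousOn_const
        apply ContinuousOn.sub continuousOn_const
        apply ContinuousOn.log
        · exact (continuous_const.sub continuous_id).continuousOn
        · intro y hy
          exact (sub_pos.2 hy.2).ne'
      · apply continuousOn_finset_sum
        intro ℓ _
        apply ContinuousOn.sub
        · exact ((continuous_const.mul continuous_id).div_const _).continuousOn
        · apply ContinuousOn.mul continuousOn_const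
          apply ContinuousOn.log
          · exact (continuous_const.add (continuous_id.div_const _)).continuousOn
          · intro y hy
            have hσ2 : (0:ℝ) < (σ ℓ) ^ 2 := pow_pos (hσ ℓ) 2
            have : (0:ℝ) < 1 + y / (σ ℓ) ^ 2 := by
              have := hy.1
              positivity
            exact this.ne'
    have hanti : StrictAntiOn F (Set.Ico 0 β₀) := by
      apply strictAntiOn_of_deriv_neg (convex_Ico 0 β₀) hcont
      intro y hy
      rw [interior_Ico] at hy
      have heq : F =ᶠ[nhds y] h :=
        Filter.eventuallyEq_of_mem (isOpen_Ioo.mem_nhds hy)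
          (fun z hz => hFh z ⟨le_of_lt hz.1, hz.2⟩)
      have hd := (hderiv y hy).congr_of_eventuallyEq heq
      rw [hd.deriv]
      exact hneg y hy
    exact hanti ⟨le_refl 0, hβ₀⟩ hx (lt_of_le_of_ne hx.1 (Ne.symm hne))
end

section
/- With F and R as above: if R(0) < 0 then R has a unique root x* in (0, β₀), F' is strictly positive on (0, x*) and strictly negative on (x*, β₀), and x* is the unique maximizer of F on [0, β₀). -/
open Real Set

/-- if `R(0) < 0` then `R` has a unique root `x⋆` in `(0, β₀)`, `F'` is
strictly positive on `(0, x⋆)` and strictly negative on `(x⋆, β₀)`, and `x⋆` is the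
unique maximizer of `F` on `[0, β₀)`. -/
theorem stmt_8 (L : ℕ) (hL : 0 < L) (β₀ : ℝ) (hβ₀ : 0 < β₀)
    (β σ : Fin L → ℝ) (hβ : ∀ ℓ, 0 < β ℓ) (hσ : ∀ ℓ, 0 < σ ℓ)
    (F R : ℝ → ℝ)
    (hF : ∀ x ∈ Set.Ico (0 : ℝ) β₀,
      F x = x - β₀ * Real.log (β₀ / (β₀ - x))
        + ∑ ℓ, (β ℓ * x / (σ ℓ) ^ 2 - β ℓ * Real.log (1 + x / (σ ℓ) ^ 2)))
    (hR : ∀ x ∈ Set.Ico (0 : ℝ) β₀,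
      R x = 1 - ∑ ℓ, (β ℓ / (σ ℓ) ^ 2) * ((β₀ - x) / ((σ ℓ) ^ 2 + x)))
    (hR0 : R 0 < 0) :
    ∃ xs ∈ Set.Ioo (0 : ℝ) β₀,
      R xs = 0 ∧
      (∀ y ∈ Set.Ioo (0 : ℝ) β₀, R y = 0 → y = xs) ∧
      (∀ x ∈ Set.Ioo (0 : ℝ) xs, 0 < deriv F x) ∧
      (∀ x ∈ Set.Ioo xs β₀, deriv F x < 0) ∧
      (∀ x ∈ Set.Ico (0 : ℝ) β₀, x ≠ xs → F x < F xs) := by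
  have hs : ∀ ℓ, (0:ℝ) < (σ ℓ)^2 := fun ℓ => pow_pos (hσ ℓ) 2
  have hne : (Finset.univ : Finset (Fin L)).Nonempty := by
    simpa [Finset.univ_nonempty_iff] using Fin.pos_iff_nonempty.mp hL
  -- strict monotonicity of R on Ico 0 β₀
  have Rmono : StrictMonoOn R (Set.Ico 0 β₀) := by
    intro x hx y hy hxy
    rw [hR x hx, hR y hy]
    have hsum : ∑ ℓ, (β ℓ / (σ ℓ)^2) * ((β₀ - y) / ((σ ℓ)^2 + y))
        < ∑ ℓ, (β ℓ / (σ ℓ)^2) * ((β₀ - x) / ((σ ℓ)^2 + x)) := by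
      apply Finset.sum_lt_sum_of_nonempty hne
      intro ℓ _
      have h1 : (0:ℝ) < β ℓ / (σ ℓ)^2 := div_pos (hβ ℓ) (hs ℓ)
      have h2 : (β₀ - y) / ((σ ℓ)^2 + y) < (β₀ - x) / ((σ ℓ)^2 + x) := by
        rw [div_lt_div_iff₀ (by nlinarith [hx.1, hy.2, hs ℓ]) (by nlinarith [hx.1, hy.2, hs ℓ])]
        nlinarith [hx.1, hy.2, hs ℓ]
      exact (mul_lt_mul_iff_right₀ h1).mpr h2
    linarith
  -- continuity of R on Ico 0 β₀
  have Rcont : ContinuousOn R (Set.Ico 0 β₀) := by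
    apply ContinuousOn.congr (f := fun x => 1 - ∑ ℓ, (β ℓ / (σ ℓ)^2) * ((β₀ - x) / ((σ ℓ)^2 + x)))
    · apply ContinuousOn.sub continuousOn_const
      apply continuousOn_finset_sum
      intro ℓ _
      apply ContinuousOn.mul continuousOn_const
      apply ContinuousOn.div
      · exact (continuous_const.sub continuous_id).continuousOn
      · exact (continuous_const.add continuous_id).continuousOn
      · intro x hx; nlinarith [hx.1, hs ℓ]
    · intro x hx; exact hR x hx
  -- a point where R is positive
  set C : ℝ := ∑ ℓ, β ℓ / (σ ℓ)^4 with hC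
  have hCpos : 0 < C := Finset.sum_pos (fun ℓ _ => div_pos (hβ ℓ) (pow_pos (hσ ℓ) 4)) hne
  set x₁ : ℝ := β₀ - min (β₀/2) (1/(2*C)) with hx₁
  have hmpos : 0 < min (β₀/2) (1/(2*C)) := lt_min (by linarith) (by positivity)
  have hx₁lt : x₁ < β₀ := by simp only [hx₁]; linarith
  have hx₁pos : 0 < x₁ := by
    have := min_le_left (β₀/2) (1/(2*C)); simp only [hx₁]; linarith
  have hx₁mem : x₁ ∈ Set.Ico (0:ℝ) β₀ := ⟨le_of_lt hx₁pos, hx₁lt⟩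
  have hRx₁ : 0 < R x₁ := by
    rw [hR x₁ hx₁mem]
    have hb : β₀ - x₁ ≤ 1/(2*C) := by
      have := min_le_right (β₀/2) (1/(2*C)); simp only [hx₁]; linarith
    have hbnn : 0 ≤ β₀ - x₁ := le_of_lt (by linarith)
    have hsum : ∑ ℓ, (β ℓ / (σ ℓ)^2) * ((β₀ - x₁) / ((σ ℓ)^2 + x₁))
        ≤ ∑ ℓ, (β ℓ / (σ ℓ)^4) * (β₀ - x₁) := by
      apply Finset.sum_le_sum
      intro ℓ _
      have h1 : (β₀ - x₁) / ((σ ℓ)^2 + x₁) ≤ (β₀ - x₁) / (σ ℓ)^2 :=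
        div_le_div_of_nonneg_left hbnn (hs ℓ) (by linarith)
      calc (β ℓ / (σ ℓ)^2) * ((β₀ - x₁) / ((σ ℓ)^2 + x₁))
          ≤ (β ℓ / (σ ℓ)^2) * ((β₀ - x₁) / (σ ℓ)^2) :=
            mul_le_mul_of_nonneg_left h1 (le_of_lt (div_pos (hβ ℓ) (hs ℓ)))
        _ = (β ℓ / (σ ℓ)^4) * (β₀ - x₁) := by
            field_simp
    have hCb : C * (β₀ - x₁) ≤ 1/2 := by
      calc C * (β₀ - x₁) ≤ C * (1/(2*C)) := mul_le_mul_of_nonneg_left hb (le_of_lt hCpos)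
        _ = 1/2 := by field_simp
    have : ∑ ℓ, (β ℓ / (σ ℓ)^4) * (β₀ - x₁) = C * (β₀ - x₁) := by
      rw [hC, Finset.sum_mul]
    linarith
  -- IVT to find the root
  have hR0' : R 0 < 0 := hR0
  have hmem0 : (0:ℝ) ∈ Set.Ico (0:ℝ) β₀ := ⟨le_refl _, hβ₀⟩
  obtain ⟨xs, hxsIcc, hRxs⟩ := intermediate_value_Icc (le_of_lt hx₁pos)
    (Rcont.mono (fun z hz => ⟨hz.1, lt_of_le_of_lt hz.2 hx₁lt⟩))
    (⟨le_of_lt hR0, le_of_lt hRx₁⟩ : (0:ℝ) ∈ Set.Icc (R 0) (R x₁))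
  have hxs0 : 0 < xs := by
    rcases lt_or_eq_of_le hxsIcc.1 with h | h
    · exact h
    · exfalso; rw [← h] at hRxs; linarith
  have hxsβ : xs < β₀ := lt_of_le_of_lt hxsIcc.2 hx₁lt
  have hxsmem : xs ∈ Set.Ico (0:ℝ) β₀ := ⟨le_of_lt hxs0, hxsβ⟩
  -- derivative of F
  have hFderiv : ∀ x ∈ Set.Ioo (0:ℝ) β₀,
      deriv F x = -(x/(β₀ - x)) * (1 - ∑ ℓ, (β ℓ / (σ ℓ)^2) * ((β₀ - x) / ((σ ℓ)^2 + x))) := by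
    intro x hx
    obtain ⟨hx0, hxβ⟩ := hx
    have hbx : 0 < β₀ - x := by linarith
    -- derivative of first part
    have h2a : HasDerivAt (fun y => Real.log β₀ - Real.log (β₀ - y)) (-(-1/(β₀-x))) x := by
      have : HasDerivAt (fun y : ℝ => β₀ - y) (-1) x := (hasDerivAt_id x).const_sub β₀
      exact (this.log hbx.ne').const_sub (Real.log β₀)
    have h2 : HasDerivAt (fun y => Real.log (β₀ / (β₀ - y))) (1/(β₀-x)) x := by
      have hev : (fun y => Real.log (β₀ / (β₀ - y))) =ᶠ[nhds x]
          (fun y => Real.log β₀ - Real.log (β₀ - y)) := by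
        filter_upwards [Iio_mem_nhds hxβ] with y hy
        rw [Real.log_div hβ₀.ne' (by simp at hy; linarith)]
      have := h2a.congr_of_eventuallyEq hev
      rw [show (1:ℝ)/(β₀-x) = -(-1/(β₀-x)) by ring]; exact this
    have h3 : ∀ ℓ : Fin L, HasDerivAt
        (fun y => β ℓ * y / (σ ℓ)^2 - β ℓ * Real.log (1 + y / (σ ℓ)^2))
        (β ℓ / (σ ℓ)^2 - β ℓ * ((1/(σ ℓ)^2) / (1 + x/(σ ℓ)^2))) x := by
      intro ℓ
      have hin : HasDerivAt (fun y : ℝ => 1 + y / (σ ℓ)^2) (1/(σ ℓ)^2) x := by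
        simpa using ((hasDerivAt_id x).div_const ((σ ℓ)^2)).const_add 1
      have hpos : (0:ℝ) < 1 + x/(σ ℓ)^2 := by
        have : 0 ≤ x/(σ ℓ)^2 := div_nonneg hx0.le (hs ℓ).le
        linarith
      have hlog := hin.log hpos.ne'
      have hlin : HasDerivAt (fun y : ℝ => β ℓ * y / (σ ℓ)^2) (β ℓ / (σ ℓ)^2) x := by
        have := ((hasDerivAt_id x).const_mul (β ℓ)).div_const ((σ ℓ)^2)
        simpa using this
      exact hlin.sub (hlog.const_mul (β ℓ))
    have hg : HasDerivAt
        (fun y => y - β₀ * Real.log (β₀ / (β₀ - y))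
          + ∑ ℓ, (β ℓ * y / (σ ℓ)^2 - β ℓ * Real.log (1 + y / (σ ℓ)^2)))
        (1 - β₀ * (1/(β₀-x)) + ∑ ℓ, (β ℓ / (σ ℓ)^2 - β ℓ * ((1/(σ ℓ)^2) / (1 + x/(σ ℓ)^2)))) x := by
      exact ((hasDerivAt_id x).sub (h2.const_mul β₀)).add (HasDerivAt.fun_sum (fun ℓ _ => h3 ℓ))
    have hFg : HasDerivAt F
        (1 - β₀ * (1/(β₀-x)) + ∑ ℓ, (β ℓ / (σ ℓ)^2 - β ℓ * ((1/(σ ℓ)^2) / (1 + x/(σ ℓ)^2)))) x := by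
      apply hg.congr_of_eventuallyEq
      filter_upwards [Ioo_mem_nhds hx0 hxβ] with y hy
      exact hF y ⟨hy.1.le, hy.2⟩
    rw [hFg.deriv]
    have hsum : ∑ ℓ, (β ℓ / (σ ℓ)^2 - β ℓ * ((1/(σ ℓ)^2) / (1 + x/(σ ℓ)^2)))
        = ∑ ℓ, (x/(β₀-x)) * ((β ℓ / (σ ℓ)^2) * ((β₀ - x) / ((σ ℓ)^2 + x))) := by
      apply Finset.sum_congr rfl
      intro ℓ _
      have h1 := hs ℓ
      have h2 : (0:ℝ) < (σ ℓ)^2 + x := by linarith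
      have h3 : σ ℓ ≠ 0 := (hσ ℓ).ne'
      field_simp
      ring
    rw [hsum, mul_sub, mul_one, Finset.mul_sum]
    have h1 : -(x/(β₀-x)) = 1 - β₀ * (1/(β₀-x)) := by field_simp; ring
    rw [← h1]
    simp only [neg_mul, Finset.sum_neg_distrib, sub_neg_eq_add]
  -- sign of deriv F
  have hFpos : ∀ x ∈ Set.Ioo (0:ℝ) xs, 0 < deriv F x := by
    intro x hx
    have hxβ : x < β₀ := lt_trans hx.2 hxsβ
    have hxmem : x ∈ Set.Ico (0:ℝ) β₀ := ⟨hx.1.le, hxβ⟩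
    have hRx : R x < 0 := by
      have := Rmono hxmem hxsmem hx.2
      rwa [hRxs] at this
    rw [hFderiv x ⟨hx.1, hxβ⟩, ← hR x hxmem]
    have hA : 0 < x/(β₀-x) := div_pos hx.1 (by linarith)
    nlinarith [mul_pos hA (neg_pos.mpr hRx)]
  have hFneg : ∀ x ∈ Set.Ioo xs β₀, deriv F x < 0 := by
    intro x hx
    have hx0 : 0 < x := lt_trans hxs0 hx.1
    have hxmem : x ∈ Set.Ico (0:ℝ) β₀ := ⟨hx0.le, hx.2⟩
    have hRx : 0 < R x := by
      have := Rmono hxsmem hxmem hx.1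
      rwa [hRxs] at this
    rw [hFderiv x ⟨hx0, hx.2⟩, ← hR x hxmem]
    have hA : 0 < x/(β₀-x) := div_pos hx0 (by linarith [hx.2])
    nlinarith [mul_pos hA hRx]
  -- continuity of F
  have Fcont : ContinuousOn F (Set.Ico 0 β₀) := by
    apply ContinuousOn.congr (f := fun x => x - β₀ * Real.log (β₀/(β₀-x))
      + ∑ ℓ, (β ℓ * x/(σ ℓ)^2 - β ℓ * Real.log (1 + x/(σ ℓ)^2)))
    · apply ContinuousOn.add
      · apply ContinuousOn.sub continuousOn_id
        apply ContinuousOn.mul continuousOn_const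
        apply ContinuousOn.log
        · exact ContinuousOn.div continuousOn_const
            ((continuous_const.sub continuous_id).continuousOn)
            (fun x hx => sub_ne_zero.mpr hx.2.ne')
        · intro x hx
          have hbx : (0:ℝ) < β₀ - x := by linarith [hx.2]
          exact (div_pos hβ₀ hbx).ne'
      · apply continuousOn_finset_sum
        intro ℓ _
        apply ContinuousOn.sub
        · exact ((continuous_const.mul continuous_id).div_const _).continuousOn
        · apply ContinuousOn.mul continuousOn_const
          apply ContinuousOn.log
          · exact (continuous_const.add (continuous_id.div_const _)).continuousOn
          · intro x hx
            have : (0:ℝ) ≤ x/(σ ℓ)^2 := div_nonneg hx.1 (hs ℓ).le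
            have : (0:ℝ) < 1 + x/(σ ℓ)^2 := by linarith
            exact this.ne'
    · exact fun x hx => hF x hx
  have mono1 : StrictMonoOn F (Set.Icc 0 xs) := by
    apply strictMonoOn_of_deriv_pos (convex_Icc _ _)
    · exact Fcont.mono (fun z hz => ⟨hz.1, lt_of_le_of_lt hz.2 hxsβ⟩)
    · rw [interior_Icc]; exact hFpos
  have anti1 : StrictAntiOn F (Set.Ico xs β₀) := by
    apply strictAntiOn_of_deriv_neg (convex_Ico _ _)
    · exact Fcont.mono (fun z hz => ⟨le_trans hxs0.le hz.1, hz.2⟩)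
    · rw [interior_Ico]; exact hFneg
  refine ⟨xs, ⟨hxs0, hxsβ⟩, hRxs, ?_, hFpos, hFneg, ?_⟩
  · intro y hy hRy
    exact Rmono.injOn ⟨hy.1.le, hy.2⟩ hxsmem (hRy.trans hRxs.symm)
  · intro x hx hne'
    rcases lt_or_gt_of_ne hne' with h | h
    · exact mono1 ⟨hx.1, h.le⟩ ⟨hxs0.le, le_refl _⟩ h
    · exact anti1 ⟨le_refl _, hxsβ⟩ ⟨h.le, hx.2⟩ h
end

section
/- Let T be a p×p symmetric positive semidefinite matrix with diagonal vector t, let u be a random vector in ℝᵖ with at most one entry not deterministically zero, and let w ~ N(0, I_p) be independent of u. Then KL(law(T^{1/2} u + w) ‖ law(w)) = KL(law(diag(t)^{1/2} u + w) ‖ law(w)). -/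
open MeasureTheory ProbabilityTheory Matrix

/-- The Kullback-Leibler divergence `D(P‖Q) = ∫ log (dP/dQ) dP`. -/
noncomputable def klReal {α : Type*} [MeasurableSpace α] (P Q : Measure α) : ℝ :=
  ∫ x, Real.log ((P.rnDeriv Q x).toReal) ∂P

/-- The standard Gaussian measure on `ι → ℝ`. -/
noncomputable def stdGaussianPi (ι : Type*) [Fintype ι] : Measure (ι → ℝ) :=
  Measure.pi fun _ => ProbabilityTheory.gaussianReal 0 1

section Aux

open Real ENNReal

/-- lintegral of a product of functions of the coordinates w.r.t. a product measure. -/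
theorem lintegral_pi_prod {n : ℕ} (μ : Fin n → Measure ℝ) [∀ i, SigmaFinite (μ i)]
    (f : Fin n → ℝ → ℝ≥0∞) (hf : ∀ i, Measurable (f i)) :
    ∫⁻ x : Fin n → ℝ, ∏ i, f i (x i) ∂Measure.pi μ = ∏ i, ∫⁻ x, f i x ∂μ i := by
  induction n with
  | zero => simp [Measure.pi_of_empty (β := fun _ : Fin 0 => ℝ) μ]
  | succ n ih =>
    calc ∫⁻ x : Fin (n+1) → ℝ, ∏ i, f i (x i) ∂Measure.pi μ
        = ∫⁻ z : ℝ × (Fin n → ℝ), f 0 z.1 * ∏ i : Fin n, f i.succ (z.2 i)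
            ∂((μ 0).prod (Measure.pi fun i => μ ((0 : Fin (n+1)).succAbove i))) := by
          rw [← ((measurePreserving_piFinSuccAbove μ 0).symm).lintegral_comp_emb
            (MeasurableEquiv.measurableEmbedding _)]
          congr 1
          ext z
          simp_rw [MeasurableEquiv.piFinSuccAbove_symm_apply, Fin.insertNthEquiv,
            Equiv.coe_fn_mk, Fin.insertNth_zero, Fin.prod_univ_succ, Fin.cons_zero, Fin.cons_succ]
          simp
      _ = ∏ i, ∫⁻ x, f i x ∂μ i := by
          rw [lintegral_prod_mul (f := f 0) (g := fun y : Fin n → ℝ => ∏ i, f i.succ (y i))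
            (hf 0).aemeasurable
            (Finset.measurable_prod Finset.univ fun i _ =>
              (hf i.succ).comp (measurable_pi_apply i)).aemeasurable]
          have : ∀ i : Fin n, ((0 : Fin (n+1)).succAbove i) = i.succ := fun i => rfl
          simp_rw [this]
          rw [ih (fun i => μ i.succ) (fun i => f i.succ) (fun i => hf i.succ),
            Fin.prod_univ_succ]

/-- The product Gaussian density. -/
noncomputable def gpdf (p : ℕ) : (Fin p → ℝ) → ℝ≥0∞ :=
  fun x => ∏ i, gaussianPDF 0 1 (x i)

lemma measurable_gpdf (p : ℕ) : Measurable (gpdf p) :=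
  Finset.measurable_prod Finset.univ fun i _ =>
    (measurable_gaussianPDF 0 1).comp (measurable_pi_apply i)

lemma gpdf_eq (p : ℕ) (x : Fin p → ℝ) :
    gpdf p x = ENNReal.ofReal ((Real.sqrt (2 * π))⁻¹ ^ p * Real.exp (-(∑ i, x i ^ 2) / 2)) := by
  have h : ∀ t : ℝ, gaussianPDFReal 0 1 t = (Real.sqrt (2 * π))⁻¹ * Real.exp (-(t ^ 2) / 2) := by
    intro t
    simp [gaussianPDFReal]
  unfold gpdf gaussianPDF
  rw [← ENNReal.ofReal_prod_of_nonneg (fun i _ => gaussianPDFReal_nonneg 0 1 (x i))]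
  congr 1
  simp_rw [h]
  rw [Finset.prod_mul_distrib, Finset.prod_const, ← Real.exp_sum]
  congr 1
  · simp [Finset.card_univ]
  · rw [← Finset.sum_div, ← Finset.sum_neg_distrib]

lemma gpdf_pos (p : ℕ) (x : Fin p → ℝ) : 0 < gpdf p x := by
  rw [gpdf_eq]
  refine ENNReal.ofReal_pos.mpr ?_
  positivity

lemma stdGaussianPi_eq (p : ℕ) :
    stdGaussianPi (Fin p) = (volume : Measure (Fin p → ℝ)).withDensity (gpdf p) := by
  refine Measure.pi_eq fun s hs => ?_
  rw [withDensity_apply _ (MeasurableSet.univ_pi hs), ← lintegral_indicator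
    (MeasurableSet.univ_pi hs)]
  have hind : ∀ x : Fin p → ℝ, Set.indicator (Set.pi Set.univ s) (gpdf p) x
      = ∏ i, Set.indicator (s i) (gaussianPDF 0 1) (x i) := by
    intro x
    by_cases hx : x ∈ Set.pi Set.univ s
    · rw [Set.indicator_of_mem hx]
      unfold gpdf
      exact Finset.prod_congr rfl fun i _ =>
        (Set.indicator_of_mem (hx i (Set.mem_univ i)) _).symm
    · rw [Set.indicator_of_notMem hx]
      rw [Set.mem_univ_pi] at hx
      push_neg at hx
      obtain ⟨i, hi⟩ := hx
      exact (Finset.prod_eq_zero (Finset.mem_univ i)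
        (by rw [Set.indicator_of_notMem hi])).symm
  simp_rw [hind]
  rw [show (volume : Measure (Fin p → ℝ)) = Measure.pi fun _ => volume from rfl,
    lintegral_pi_prod _ _ (fun i => (measurable_gaussianPDF 0 1).indicator (hs i))]
  exact Finset.prod_congr rfl fun i _ => by
    rw [lintegral_indicator (hs i), ← gaussianReal_apply 0 one_ne_zero]

lemma map_withDensity_equiv {α β : Type*} [MeasurableSpace α] [MeasurableSpace β]
    (e : α ≃ᵐ β) (μ : Measure α) (g : β → ℝ≥0∞) (hg : Measurable g) :
    Measure.map e (μ.withDensity (fun x => g (e x))) = (Measure.map e μ).withDensity g := by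
  ext s hs
  rw [Measure.map_apply e.measurable hs, withDensity_apply _ hs,
    withDensity_apply _ (e.measurable hs), setLIntegral_map hs hg e.measurable]

instance stdGaussianPi_isProb (p : ℕ) : IsProbabilityMeasure (stdGaussianPi (Fin p)) := by
  unfold stdGaussianPi; infer_instance

lemma map_stdGaussianPi (p : ℕ) (e : (Fin p → ℝ) ≃ᵐ (Fin p → ℝ))
    (he : MeasurePreserving e volume volume)
    (hnorm : ∀ x, ∑ i, e x i ^ 2 = ∑ i, x i ^ 2) :
    Measure.map e (stdGaussianPi (Fin p)) = stdGaussianPi (Fin p) := by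
  have hg : gpdf p = fun x => gpdf p (e x) := by
    funext x
    rw [gpdf_eq, gpdf_eq, hnorm]
  rw [stdGaussianPi_eq]
  conv_lhs => rw [hg]
  rw [map_withDensity_equiv e volume (gpdf p) (measurable_gpdf p), he.map_eq]

lemma volume_absCont_stdGaussianPi (p : ℕ) :
    (volume : Measure (Fin p → ℝ)) ≪ stdGaussianPi (Fin p) := by
  rw [stdGaussianPi_eq]
  exact withDensity_absolutelyContinuous' (measurable_gpdf p).aemeasurable
    (ae_of_all _ fun x => (gpdf_pos p x).ne')

lemma stdGaussianPi_absCont_volume (p : ℕ) :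
    stdGaussianPi (Fin p) ≪ (volume : Measure (Fin p → ℝ)) := by
  rw [stdGaussianPi_eq]; exact withDensity_absolutelyContinuous _ _

lemma map_add_stdGaussianPi_absCont (p : ℕ) (c : Fin p → ℝ) :
    Measure.map (fun y => c + y) (stdGaussianPi (Fin p)) ≪ stdGaussianPi (Fin p) := by
  refine Measure.AbsolutelyContinuous.mk fun s hs hQs => ?_
  rw [Measure.map_apply (measurable_const_add c) hs]
  refine stdGaussianPi_absCont_volume p ?_
  rw [measure_preimage_add]
  exact volume_absCont_stdGaussianPi p hQs

/-- The sum of independent random vectors, one of which is standard Gaussian, has law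
absolutely continuous w.r.t. the standard Gaussian. -/
lemma add_indep_absCont {Ω : Type*} [MeasureSpace Ω] [IsProbabilityMeasure (ℙ : Measure Ω)]
    (p : ℕ) (X Y : Ω → Fin p → ℝ) (hX : Measurable X) (hY : Measurable Y)
    (hXY : IndepFun X Y ℙ) (hYlaw : Measure.map Y ℙ = stdGaussianPi (Fin p)) :
    Measure.map (fun ω => X ω + Y ω) ℙ ≪ stdGaussianPi (Fin p) := by
  have hprod : Measure.map (fun ω => (X ω, Y ω)) ℙ
      = (Measure.map X ℙ).prod (Measure.map Y ℙ) :=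
    (indepFun_iff_map_prod_eq_prod_map_map hX.aemeasurable hY.aemeasurable).mp hXY
  have hcomp : Measure.map (fun ω => X ω + Y ω) ℙ
      = Measure.map (fun z : (Fin p → ℝ) × (Fin p → ℝ) => z.1 + z.2)
          ((Measure.map X ℙ).prod (stdGaussianPi (Fin p))) := by
    rw [← hYlaw, ← hprod, Measure.map_map (g := fun z : (Fin p → ℝ) × (Fin p → ℝ) => z.1 + z.2)
      (measurable_fst.add measurable_snd)
      (hX.prodMk hY)]
    rfl
  rw [hcomp]
  have : IsProbabilityMeasure (Measure.map X ℙ) := Measure.isProbabilityMeasure_map hX.aemeasurable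
  refine Measure.AbsolutelyContinuous.mk fun s hs hQs => ?_
  rw [Measure.map_apply (f := fun z : (Fin p → ℝ) × (Fin p → ℝ) => z.1 + z.2)
    (measurable_fst.add measurable_snd) hs,
    Measure.prod_apply (s := (fun z : (Fin p → ℝ) × (Fin p → ℝ) => z.1 + z.2) ⁻¹' s)
      ((measurable_fst.add measurable_snd) hs)]
  have hz : ∀ x : Fin p → ℝ,
      stdGaussianPi (Fin p) (Prod.mk x ⁻¹' ((fun z : (Fin p → ℝ) × (Fin p → ℝ) => z.1 + z.2) ⁻¹' s)) = 0 := by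
    intro x
    have : (Prod.mk x ⁻¹' ((fun z : (Fin p → ℝ) × (Fin p → ℝ) => z.1 + z.2) ⁻¹' s))
        = (fun y => x + y) ⁻¹' s := rfl
    rw [this, ← Measure.map_apply (measurable_const_add x) hs]
    exact map_add_stdGaussianPi_absCont p x hQs
  simp [hz]

/-- KL divergence is invariant under pushforward by a measurable equivalence, provided
absolute continuity holds. -/
lemma klReal_map {α β : Type*} [MeasurableSpace α] [MeasurableSpace β] (e : α ≃ᵐ β)
    (P Q : Measure α) [SigmaFinite P] [SigmaFinite Q] (hPQ : P ≪ Q) :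
    klReal (Measure.map e P) (Measure.map e Q) = klReal P Q := by
  have h := e.measurableEmbedding.rnDeriv_map P Q
  have h' : (fun x => (Measure.map e P).rnDeriv (Measure.map e Q) (e x))
      =ᵐ[P] P.rnDeriv Q := h.filter_mono hPQ.ae_le
  unfold klReal
  have hm : AEStronglyMeasurable
      (fun x => Real.log ((Measure.map e P).rnDeriv (Measure.map e Q) x).toReal)
      (Measure.map e P) :=
    ((Measure.measurable_rnDeriv _ _).ennreal_toReal.log).aestronglyMeasurable
  rw [integral_map e.measurable.aemeasurable hm]
  exact integral_congr_ae (by filter_upwards [h'] with x hx; rw [hx])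

/-- Existence of a volume-preserving, norm-preserving measurable equivalence of `Fin p → ℝ`
mapping `v • c₂ + y` to `v • c₁ + e y`, when `c₁` and `c₂` have the same Euclidean norm. -/
lemma exists_isometry (p : ℕ) (c₁ c₂ : Fin p → ℝ) (h : ∑ i, c₁ i ^ 2 = ∑ i, c₂ i ^ 2) :
    ∃ e : (Fin p → ℝ) ≃ᵐ (Fin p → ℝ), MeasurePreserving e volume volume
      ∧ (∀ x, ∑ i, e x i ^ 2 = ∑ i, x i ^ 2)
      ∧ (∀ (v : ℝ) (y : Fin p → ℝ), e (v • c₂ + y) = v • c₁ + e y) := by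
  classical
  set E := EuclideanSpace ℝ (Fin p)
  have hsumsq : ∀ z : E, ∑ i, z i ^ 2 = ‖z‖ ^ 2 := by
    intro z
    rw [EuclideanSpace.norm_eq, Real.sq_sqrt (by positivity)]
    exact Finset.sum_congr rfl fun i _ => by rw [Real.norm_eq_abs, sq_abs]
  set x₁ : E := (WithLp.equiv 2 (Fin p → ℝ)).symm c₁ with hx₁
  set x₂ : E := (WithLp.equiv 2 (Fin p → ℝ)).symm c₂ with hx₂
  have happ₁ : ∀ i, x₁ i = c₁ i := fun i => rfl
  have happ₂ : ∀ i, x₂ i = c₂ i := fun i => rfl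
  have hnorm : ‖x₂‖ = ‖x₁‖ := by
    have h1 := hsumsq x₁
    have h2 := hsumsq x₂
    simp_rw [happ₁] at h1
    simp_rw [happ₂] at h2
    have h3 : ‖x₂‖ ^ 2 = ‖x₁‖ ^ 2 := by rw [← h1, ← h2, h]
    have := congrArg Real.sqrt h3
    rwa [Real.sqrt_sq (norm_nonneg _), Real.sqrt_sq (norm_nonneg _)] at this
  set L : E ≃ₗᵢ[ℝ] E := Submodule.reflection (ℝ ∙ (x₂ - x₁))ᗮ with hLdef
  have hL : L x₂ = x₁ := Submodule.reflection_sub hnorm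
  refine ⟨(MeasurableEquiv.toLp 2 (Fin p → ℝ)).trans
    (L.toHomeomorph.toMeasurableEquiv.trans (MeasurableEquiv.toLp 2 (Fin p → ℝ)).symm),
    ?_, ?_, ?_⟩
  · exact (EuclideanSpace.volume_preserving_symm_measurableEquiv_toLp (Fin p)).comp
      (L.measurePreserving.comp
        (EuclideanSpace.volume_preserving_symm_measurableEquiv_toLp (Fin p)).symm)
  · intro x
    have : ∀ i, ((MeasurableEquiv.toLp 2 (Fin p → ℝ)).trans
        (L.toHomeomorph.toMeasurableEquiv.trans (MeasurableEquiv.toLp 2 (Fin p → ℝ)).symm)) x i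
        = L ((WithLp.equiv 2 (Fin p → ℝ)).symm x) i := fun i => rfl
    simp_rw [this]
    rw [hsumsq, L.norm_map, ← hsumsq]
    rfl
  · intro v y
    show (WithLp.equiv 2 (Fin p → ℝ))
        (L ((WithLp.equiv 2 (Fin p → ℝ)).symm (v • c₂ + y)))
      = v • c₁ + (WithLp.equiv 2 (Fin p → ℝ)) (L ((WithLp.equiv 2 (Fin p → ℝ)).symm y))
    have h1 : (WithLp.equiv 2 (Fin p → ℝ)).symm (v • c₂ + y)
        = v • x₂ + (WithLp.equiv 2 (Fin p → ℝ)).symm y := by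
      rw [hx₂]; rfl
    rw [h1, map_add, LinearIsometryEquiv.map_smul, hL]
    rfl



/-- for a symmetric PSD matrix `T` with diagonal `t`, a random vector `u`
with at most one entry not deterministically zero, and an independent standard Gaussian
`w ~ N(0, I_p)`,
`KL(law(T^{1/2} u + w) ‖ law(w)) = KL(law(diag(t)^{1/2} u + w) ‖ law(w))`. -/
theorem stmt_15 {Ω : Type*} [MeasureSpace Ω] [IsProbabilityMeasure (ℙ : Measure Ω)]
    (p : ℕ) (T : Matrix (Fin p) (Fin p) ℝ) (hT : T.PosSemidef)
    (u : Ω → Fin p → ℝ) (w : Ω → Fin p → ℝ) (hu : Measurable u) (hw : Measurable w)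
    (k : Fin p) (huzero : ∀ j : Fin p, j ≠ k → ∀ᵐ ω ∂ℙ, u ω j = 0)
    (hwlaw : Measure.map w ℙ = stdGaussianPi (Fin p))
    (huw : IndepFun u w ℙ) :
    klReal (Measure.map (fun ω => (hT.1.eigenvectorUnitary.1 * Matrix.diagonal ((RCLike.ofReal : ℝ → ℝ) ∘ Real.sqrt ∘ hT.1.eigenvalues)
        * (star hT.1.eigenvectorUnitary : Matrix (Fin p) (Fin p) ℝ)).mulVec (u ω) + w ω) ℙ) (Measure.map w ℙ)
      = klReal
          (Measure.map
            (fun ω => (Matrix.diagonal fun i => Real.sqrt (T i i)).mulVec (u ω) + w ω) ℙ)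
          (Measure.map w ℙ) := by
  classical
  set S : Matrix (Fin p) (Fin p) ℝ := hT.1.eigenvectorUnitary.1 * Matrix.diagonal ((RCLike.ofReal : ℝ → ℝ) ∘ Real.sqrt ∘ hT.1.eigenvalues)
        * (star hT.1.eigenvectorUnitary : Matrix (Fin p) (Fin p) ℝ) with hS
  have hSS : S * S = T := by
    conv_rhs => rw [hT.1.spectral_theorem, Unitary.conjStarAlgAut_apply]
    have hU : (star hT.1.eigenvectorUnitary : Matrix (Fin p) (Fin p) ℝ) * hT.1.eigenvectorUnitary.1 = 1 := by simp
    rw [hS, show ∀ A B C D E F : Matrix (Fin p) (Fin p) ℝ, A * B * C * (D * E * F) = A * (B * (C * D) * E) * F from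
      fun A B C D E F => by simp only [Matrix.mul_assoc], hU, Matrix.mul_one, diagonal_mul_diagonal]
    congr 3
    funext i
    simp [Real.mul_self_sqrt (hT.eigenvalues_nonneg i)]
  have hSh : S.IsHermitian := by
    rw [hS]
    exact isHermitian_mul_mul_conjTranspose _ (isHermitian_diagonal _)
  rw [hwlaw]
  set Q := stdGaussianPi (Fin p) with hQdef
  haveI hQprob : IsProbabilityMeasure Q := stdGaussianPi_isProb p
  set v : Ω → ℝ := fun ω => u ω k with hvdef
  have hv : Measurable v := (measurable_pi_apply k).comp hu
  have hae : ∀ᵐ ω ∂ℙ, ∀ j, j ≠ k → u ω j = 0 := by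
    rw [ae_all_iff]
    intro j
    by_cases hj : j = k
    · exact ae_of_all _ fun ω h => absurd hj h
    · filter_upwards [huzero j hj] with ω h _ using h
  have key : ∀ A : Matrix (Fin p) (Fin p) ℝ,
      ∀ᵐ ω ∂ℙ, A.mulVec (u ω) + w ω = v ω • (fun i => A i k) + w ω := by
    intro A
    filter_upwards [hae] with ω hω
    congr 1
    funext i
    simp only [Matrix.mulVec, dotProduct, Pi.smul_apply, smul_eq_mul]
    rw [Finset.sum_eq_single k (fun j _ hj => by rw [hω j hj, mul_zero])
      (fun h => absurd (Finset.mem_univ k) h), mul_comm]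
  set c₁ : Fin p → ℝ := fun i => S i k with hc₁
  set c₂ : Fin p → ℝ := fun i => Matrix.diagonal (fun j => Real.sqrt (T j j)) i k with hc₂
  have hTkk : 0 ≤ T k k := hT.diag_nonneg
  have hsymm : ∀ i j, S i j = S j i := by
    intro i j
    have h := hSh.apply j i
    rwa [star_trivial] at h
  have hsum₁ : ∑ i, c₁ i ^ 2 = T k k := by
    conv_rhs => rw [← hSS, Matrix.mul_apply]
    refine Finset.sum_congr rfl fun j _ => ?_
    simp only [hc₁]
    rw [hsymm k j, pow_two]
  have hsum₂ : ∑ i, c₂ i ^ 2 = T k k := by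
    simp only [hc₂, Matrix.diagonal_apply]
    rw [Finset.sum_eq_single k (fun j _ hj => by simp [hj])
      (fun h => absurd (Finset.mem_univ k) h)]
    simp [Real.sq_sqrt hTkk]
  obtain ⟨e, heMP, heNorm, heLin⟩ := exists_isometry p c₁ c₂ (hsum₁.trans hsum₂.symm)
  have hQe : Measure.map e Q = Q := map_stdGaussianPi p e heMP heNorm
  -- measurability facts
  have hX₂ : Measurable (fun ω => v ω • c₂) :=
    measurable_pi_lambda _ fun i => hv.mul_const (c₂ i)
  have hsm₁ : Measurable (fun ω => v ω • c₁ + w ω) :=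
    (measurable_pi_lambda _ fun i => hv.mul_const (c₁ i)).add hw
  have hsm₂ : Measurable (fun ω => v ω • c₂ + w ω) := hX₂.add hw
  -- the joint law argument
  have hjoint : ∀ (w' : Ω → Fin p → ℝ), Measurable w' → IndepFun u w' ℙ →
      Measure.map w' ℙ = Q →
      Measure.map (fun ω => v ω • c₁ + w' ω) ℙ
        = Measure.map (fun z : ℝ × (Fin p → ℝ) => z.1 • c₁ + z.2)
            ((Measure.map v ℙ).prod Q) := by
    intro w' hw' hI hlaw
    have hIv : IndepFun v w' ℙ := hI.comp (measurable_pi_apply k) measurable_id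
    have hprod : Measure.map (fun ω => (v ω, w' ω)) ℙ
        = (Measure.map v ℙ).prod (Measure.map w' ℙ) :=
      (indepFun_iff_map_prod_eq_prod_map_map hv.aemeasurable hw'.aemeasurable).mp hIv
    have hF : Measurable (fun z : ℝ × (Fin p → ℝ) => z.1 • c₁ + z.2) :=
      (measurable_pi_lambda _ fun i => measurable_fst.mul_const (c₁ i)).add measurable_snd
    rw [← hlaw, ← hprod, Measure.map_map hF (hv.prodMk hw')]
    rfl
  have hwe : Measurable (fun ω => e (w ω)) := e.measurable.comp hw
  have hlaw_e : Measure.map (fun ω => e (w ω)) ℙ = Q := by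
    rw [show (fun ω => e (w ω)) = ⇑e ∘ w from rfl, ← Measure.map_map e.measurable hw, hwlaw]
    exact hQe
  have hIe : IndepFun u (fun ω => e (w ω)) ℙ := huw.comp measurable_id e.measurable
  have h12 : Measure.map (fun ω => v ω • c₁ + e (w ω)) ℙ
      = Measure.map (fun ω => v ω • c₁ + w ω) ℙ := by
    rw [hjoint _ hwe hIe hlaw_e, hjoint w hw huw hwlaw]
  have hmapE : Measure.map e (Measure.map (fun ω => v ω • c₂ + w ω) ℙ)
      = Measure.map (fun ω => v ω • c₁ + w ω) ℙ := by
    rw [Measure.map_map e.measurable hsm₂]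
    have hcomp : (⇑e ∘ fun ω => v ω • c₂ + w ω) = fun ω => v ω • c₁ + e (w ω) :=
      funext fun ω => heLin (v ω) (w ω)
    rw [hcomp]
    exact h12
  have hφ : Measurable (fun c : Fin p → ℝ => (c k) • c₂) :=
    measurable_pi_lambda _ fun i => by
      simpa only [Pi.smul_apply, smul_eq_mul] using (measurable_pi_apply (X := fun _ : Fin p => ℝ) k).mul_const (c₂ i)
  have hIX₂ : IndepFun (fun ω => v ω • c₂) w ℙ := huw.comp hφ measurable_id
  have hAC : Measure.map (fun ω => v ω • c₂ + w ω) ℙ ≪ Q :=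
    add_indep_absCont p _ w hX₂ hw hIX₂ hwlaw
  haveI hP₂prob : IsProbabilityMeasure (Measure.map (fun ω => v ω • c₂ + w ω) ℙ) :=
    Measure.isProbabilityMeasure_map hsm₂.aemeasurable
  rw [Measure.map_congr (key S),
    Measure.map_congr (key (Matrix.diagonal fun i => Real.sqrt (T i i)))]
  calc klReal (Measure.map (fun ω => v ω • c₁ + w ω) ℙ) Q
      = klReal (Measure.map e (Measure.map (fun ω => v ω • c₂ + w ω) ℙ))
          (Measure.map e Q) := by rw [hmapE, hQe]
    _ = klReal (Measure.map (fun ω => v ω • c₂ + w ω) ℙ) Q :=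
        klReal_map e _ Q hAC
end Aux
end
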